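/- Let x = (x₁, x₂) : ℝ → ℝ² and v = (v₁, v₂) : ℝ → ℝ² be differentiable functions satisfying the characteristic ODE system dx₁/dt = −v₁(v₂ − x₁), dx₂/dt = v₂(x₁ − v₂) − ½(v₁² + v₂²), dv₁/dt = v₂(v₂ − x₁), dv₂/dt = −v₁(v₂ − x₁). Then for all t ∈ ℝ, x₂(t) + v₁(t) = x₂(0) + v₁(0) − (t/2)·(v₁(0)² + v₂(0)²). In other words, the motion in the e₂ direction is a periodic motion superposed with a uniform fall at speed ½|v(0)|² (the ∇B drift). -/

import Mathlib

/-- Along the characteristics of the limiting gyrokinetic equation (without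
electric field), the motion in the `e₂` direction is a superposition of a
periodic motion and a uniform fall at speed `½|v(0)|²` (the `∇B` drift):
`x₂(t) + v₁(t) = x₂(0) + v₁(0) − (t/2)(v₁(0)² + v₂(0)²)`. -/
theorem characteristic_gradB_drift
    (x₁ x₂ v₁ v₂ : ℝ → ℝ)
    (hx₁ : ∀ t, HasDerivAt x₁ (-(v₁ t) * (v₂ t - x₁ t)) t)
    (hx₂ : ∀ t, HasDerivAt x₂
      (v₂ t * (x₁ t - v₂ t) - (1 / 2) * ((v₁ t) ^ 2 + (v₂ t) ^ 2)) t)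
    (hv₁ : ∀ t, HasDerivAt v₁ (v₂ t * (v₂ t - x₁ t)) t)
    (hv₂ : ∀ t, HasDerivAt v₂ (-(v₁ t) * (v₂ t - x₁ t)) t) :
    ∀ t : ℝ, x₂ t + v₁ t
      = x₂ 0 + v₁ 0 - (t / 2) * ((v₁ 0) ^ 2 + (v₂ 0) ^ 2) := by
  -- energy conservation
  have hE : ∀ t, HasDerivAt (fun t => (v₁ t) ^ 2 + (v₂ t) ^ 2) 0 t := by
    intro t
    have h := ((hv₁ t).pow 2).add ((hv₂ t).pow 2)
    refine h.congr_deriv ?_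
    ring
  have hEconst : ∀ t : ℝ, (v₁ t) ^ 2 + (v₂ t) ^ 2 = (v₁ 0) ^ 2 + (v₂ 0) ^ 2 := by
    intro t
    have := is_const_of_deriv_eq_zero (f := fun t => (v₁ t) ^ 2 + (v₂ t) ^ 2)
      (fun s => (hE s).differentiableAt) (fun s => (hE s).deriv) t 0
    simpa using this
  -- the drift-corrected coordinate is constant
  have hG : ∀ t, HasDerivAt
      (fun t => x₂ t + v₁ t + (t / 2) * ((v₁ 0) ^ 2 + (v₂ 0) ^ 2)) 0 t := by
    intro t
    have hlin : HasDerivAt (fun t : ℝ => (t / 2) * ((v₁ 0) ^ 2 + (v₂ 0) ^ 2))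
        ((1 / 2) * ((v₁ 0) ^ 2 + (v₂ 0) ^ 2)) t := by
      have := ((hasDerivAt_id t).div_const 2).mul_const ((v₁ 0) ^ 2 + (v₂ 0) ^ 2)
      simpa using this
    have h := ((hx₂ t).add (hv₁ t)).add hlin
    refine h.congr_deriv ?_
    rw [← hEconst t]
    ring
  intro t
  have := is_const_of_deriv_eq_zero
    (f := fun t => x₂ t + v₁ t + (t / 2) * ((v₁ 0) ^ 2 + (v₂ 0) ^ 2))
    (fun s => (hG s).differentiableAt) (fun s => (hG s).deriv) t 0
  try simp only at this
  linarith [this]
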